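/- Lower bound for the minimal eigenvalue of the tilted power: let σ be positive definite with smallest eigenvalue λ_min, let β > 1, δ ≥ 0 with δ < λ_min, and let ρ be Hermitian with −δ·I ≤ ρ − σ ≤ δ·I. Then σ^{(1−β)/(2β)} ρ σ^{(1−β)/(2β)} ≥ λ_min^{1/β}·(1 − δ/λ_min)·I > 0; consequently the smallest eigenvalue of (σ^{(1−β)/(2β)} ρ σ^{(1−β)/(2β)})^β is at least λ_min·(1 − δ/λ_min)^β. -/

import Mathlib

open Matrix
open scoped ComplexOrder

/-- Real matrix power via continuous functional calculus. -/
noncomputable def mpow {n : ℕ} (A : Matrix (Fin n) (Fin n) ℂ) (s : ℝ) :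
    Matrix (Fin n) (Fin n) ℂ :=
  cfc (fun x : ℝ => x ^ s) A

section aux

variable {n : ℕ} {A : Matrix (Fin n) (Fin n) ℂ} (hA : A.IsHermitian)

lemma myU_star_mul : star (hA.eigenvectorUnitary : Matrix (Fin n) (Fin n) ℂ) *
    (hA.eigenvectorUnitary : Matrix (Fin n) (Fin n) ℂ) = 1 :=
  Matrix.mem_unitaryGroup_iff'.mp (hA.eigenvectorUnitary).2

lemma myU_mul_star : (hA.eigenvectorUnitary : Matrix (Fin n) (Fin n) ℂ) *
    star (hA.eigenvectorUnitary : Matrix (Fin n) (Fin n) ℂ) = 1 :=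
  Matrix.mem_unitaryGroup_iff.mp (hA.eigenvectorUnitary).2

lemma myCfc_mul (f g : ℝ → ℝ) :
    hA.cfc f * hA.cfc g = hA.cfc (fun x => f x * g x) := by
  unfold Matrix.IsHermitian.cfc
  simp only [Unitary.conjStarAlgAut_apply]
  calc _ = (hA.eigenvectorUnitary : Matrix (Fin n) (Fin n) ℂ) *
        (diagonal (RCLike.ofReal ∘ f ∘ hA.eigenvalues) *
        ((star (hA.eigenvectorUnitary : Matrix (Fin n) (Fin n) ℂ) *
          (hA.eigenvectorUnitary : Matrix (Fin n) (Fin n) ℂ)) *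
        diagonal (RCLike.ofReal ∘ g ∘ hA.eigenvalues))) *
        star (hA.eigenvectorUnitary : Matrix (Fin n) (Fin n) ℂ) := by
        simp only [mul_assoc]
    _ = _ := by
        rw [myU_star_mul, one_mul, diagonal_mul_diagonal]
        congr 2
        ext i j
        by_cases h : i = j <;> simp [Matrix.diagonal_apply, h]

lemma myCfc_add (f g : ℝ → ℝ) :
    hA.cfc f + hA.cfc g = hA.cfc (fun x => f x + g x) := by
  unfold Matrix.IsHermitian.cfc
  simp only [Unitary.conjStarAlgAut_apply]
  rw [← add_mul, ← mul_add]
  congr 2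
  ext i j
  by_cases h : i = j <;> simp [Matrix.diagonal_apply, h]

lemma myCfc_sub (f g : ℝ → ℝ) :
    hA.cfc f - hA.cfc g = hA.cfc (fun x => f x - g x) := by
  unfold Matrix.IsHermitian.cfc
  simp only [Unitary.conjStarAlgAut_apply]
  rw [← sub_mul, ← mul_sub]
  congr 2
  ext i j
  by_cases h : i = j <;> simp [Matrix.diagonal_apply, h]

lemma myCfc_const (r : ℝ) : hA.cfc (fun _ => r) = (r : ℂ) • 1 := by
  unfold Matrix.IsHermitian.cfc
  simp only [Unitary.conjStarAlgAut_apply]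
  have : diagonal (RCLike.ofReal ∘ (fun _ : ℝ => r) ∘ hA.eigenvalues) =
      (r : ℂ) • (1 : Matrix (Fin n) (Fin n) ℂ) := by
    rw [← diagonal_one, ← diagonal_smul]
    congr 1
    ext i j
    simp
  rw [this]
  simp only [Matrix.mul_smul, Matrix.smul_mul, mul_one]
  rw [myU_mul_star]

lemma myCfc_smul (r : ℝ) (f : ℝ → ℝ) :
    (r : ℂ) • hA.cfc f = hA.cfc (fun x => r * f x) := by
  rw [← myCfc_mul hA (fun _ => r) f, myCfc_const, smul_mul_assoc, one_mul]

lemma myCfc_id : hA.cfc (fun x => x) = A := by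
  conv_rhs => rw [hA.spectral_theorem]
  rfl

lemma myCfc_herm (f : ℝ → ℝ) : (hA.cfc f).IsHermitian := by
  unfold Matrix.IsHermitian.cfc
  simp only [Unitary.conjStarAlgAut_apply]
  rw [Matrix.star_eq_conjTranspose]
  exact isHermitian_mul_mul_conjTranspose _
    (isHermitian_diagonal_iff.mpr fun i =>
      show star _ = _ from Complex.conj_ofReal _)

lemma myCfc_psd (f : ℝ → ℝ) (h : ∀ i, 0 ≤ f (hA.eigenvalues i)) :
    (hA.cfc f).PosSemidef := by
  unfold Matrix.IsHermitian.cfc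
  simp only [Unitary.conjStarAlgAut_apply]
  rw [Matrix.star_eq_conjTranspose]
  refine Matrix.PosSemidef.mul_mul_conjTranspose_same ?_ _
  refine posSemidef_diagonal_iff.mpr fun i => ?_
  simpa using Complex.zero_le_real.mpr (h i)

lemma myEig_lower (a : ℝ) (h : (A - (a : ℂ) • 1).PosSemidef) :
    ∀ i, a ≤ hA.eigenvalues i := by
  intro i
  set v : Fin n → ℂ := ⇑(hA.eigenvectorBasis i) with hvdef
  have hv : A *ᵥ v = ((hA.eigenvalues i : ℝ) : ℂ) • v := by
    have h1 := hA.mulVec_eigenvectorBasis i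
    rw [hvdef, h1]
    ext x
    simp [Complex.real_smul]
  have hvne : v ≠ 0 := by
    intro h0
    have hb := hA.eigenvectorBasis.orthonormal.1 i
    have : (hA.eigenvectorBasis i) = 0 := by
      ext x
      exact congrFun h0 x
    rw [this, norm_zero] at hb
    norm_num at hb
  have ht : 0 < star v ⬝ᵥ v := Matrix.dotProduct_star_self_pos_iff.mpr hvne
  have h2 := h.dotProduct_mulVec_nonneg v
  have key : star v ⬝ᵥ ((A - (a : ℂ) • 1) *ᵥ v) =
      ((hA.eigenvalues i - a : ℝ) : ℂ) * (star v ⬝ᵥ v) := by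
    rw [sub_mulVec, smul_mulVec, one_mulVec, hv, dotProduct_sub,
      dotProduct_smul, dotProduct_smul, smul_eq_mul, smul_eq_mul]
    push_cast
    ring
  rw [key] at h2
  -- extract real inequality
  by_contra hlt
  push_neg at hlt
  have hneg : ((hA.eigenvalues i - a : ℝ) : ℂ) < 0 := by
    rw [show (0 : ℂ) = ((0 : ℝ) : ℂ) by norm_num, Complex.real_lt_real]
    linarith
  have : ((hA.eigenvalues i - a : ℝ) : ℂ) * (star v ⬝ᵥ v) < 0 :=
    mul_neg_of_neg_of_pos hneg ht
  exact absurd h2 (not_le_of_gt this)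

end aux


/-- Lower bound for the minimal eigenvalue of the tilted power: if `σ` has smallest
eigenvalue `lmin`, `β > 1`, `0 ≤ δ < lmin`, and `-δ·I ≤ ρ - σ ≤ δ·I`, then
`σ^{(1-β)/(2β)} ρ σ^{(1-β)/(2β)} ≥ lmin^{1/β}(1 - δ/lmin)·I > 0`, and the smallest
eigenvalue of its `β`-th power is at least `lmin (1 - δ/lmin)^β`. -/
theorem tilted_lower_bound {n : ℕ}
    (ρ σ : Matrix (Fin n) (Fin n) ℂ)
    (hσ : σ.PosDef) (hρ : ρ.IsHermitian)
    (lmin : ℝ) (hlmin : 0 < lmin)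
    (hlmin_le : ∀ i, lmin ≤ hσ.1.eigenvalues i)
    (hlmin_mem : ∃ i, hσ.1.eigenvalues i = lmin)
    (β : ℝ) (hβ : 1 < β) (δ : ℝ) (hδ0 : 0 ≤ δ) (hδ : δ < lmin)
    (hup : ((δ : ℂ) • (1 : Matrix (Fin n) (Fin n) ℂ) - (ρ - σ)).PosSemidef)
    (hlo : ((ρ - σ) + (δ : ℂ) • (1 : Matrix (Fin n) (Fin n) ℂ)).PosSemidef) :
    (mpow σ ((1 - β)/(2*β)) * ρ * mpow σ ((1 - β)/(2*β))
        - ((lmin ^ ((1:ℝ)/β) * (1 - δ/lmin) : ℝ) : ℂ) •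
            (1 : Matrix (Fin n) (Fin n) ℂ)).PosSemidef ∧
      (mpow σ ((1 - β)/(2*β)) * ρ * mpow σ ((1 - β)/(2*β))).PosDef ∧
      (mpow (mpow σ ((1 - β)/(2*β)) * ρ * mpow σ ((1 - β)/(2*β))) β
          - ((lmin * (1 - δ/lmin) ^ β : ℝ) : ℂ) •
              (1 : Matrix (Fin n) (Fin n) ℂ)).PosSemidef := by
  have hβ0 : (0:ℝ) < β := by linarith
  have hβne : β ≠ 0 := ne_of_gt hβ0
  set c : ℝ := (1 - β)/(2*β) with hc
  set a : ℝ := lmin ^ ((1:ℝ)/β) * (1 - δ/lmin) with ha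
  have hσH : σ.IsHermitian := hσ.1
  have ha_pos : 0 < a := by
    apply mul_pos (Real.rpow_pos_of_pos hlmin _)
    have : δ / lmin < 1 := (div_lt_one hlmin).mpr hδ
    linarith
  set f : ℝ → ℝ := fun x => x ^ c with hf
  have hSdef : mpow σ c = hσH.cfc f := Matrix.IsHermitian.cfc_eq hσH _
  set S : Matrix (Fin n) (Fin n) ℂ := hσH.cfc f with hS
  have hS_herm : S.IsHermitian := myCfc_herm hσH f
  -- cfc computations
  have hSσS : S * σ * S = hσH.cfc (fun x => f x * x * f x) := by
    conv_lhs => rw [show σ = hσH.cfc (fun x => x) from (myCfc_id hσH).symm]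
    rw [hS, myCfc_mul, myCfc_mul]
  have hSS : (δ:ℂ) • (S * S) = hσH.cfc (fun x => δ * (f x * f x)) := by
    rw [hS, myCfc_mul, myCfc_smul]
  -- the scalar function
  set g : ℝ → ℝ := fun x => f x * x * f x - δ * (f x * f x) - a with hg
  have hterm2 : S * σ * S - (δ:ℂ) • (S * S) - (a:ℂ) • 1 = hσH.cfc g := by
    rw [hSσS, hSS, ← myCfc_const hσH a, myCfc_sub, myCfc_sub]
  have hgpos : ∀ i, 0 ≤ g (hσH.eigenvalues i) := by
    intro i
    set x : ℝ := hσH.eigenvalues i with hx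
    have hxl : lmin ≤ x := hlmin_le i
    have hx0 : 0 < x := lt_of_lt_of_le hlmin hxl
    have e1 : f x * x * f x = x ^ ((1:ℝ)/β) := by
      have h' : c + 1 + c = 1/β := by rw [hc]; field_simp; ring_nf
      have h2 : x ^ (c + 1 + c) = x ^ c * x * x ^ c := by
        rw [Real.rpow_add hx0, Real.rpow_add hx0, Real.rpow_one]
      rw [hf]
      simp only
      rw [← h2, h']
    have e2 : f x * f x = x ^ ((1-β)/β) := by
      have h' : c + c = (1-β)/β := by rw [hc]; field_simp; ring_nf
      have h2 : x ^ (c + c) = x ^ c * x ^ c := Real.rpow_add hx0 c c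
      rw [hf]
      simp only
      rw [← h2, h']
    have h1 : lmin ^ ((1:ℝ)/β) ≤ x ^ ((1:ℝ)/β) :=
      Real.rpow_le_rpow hlmin.le hxl (by positivity)
    have h2 : x ^ ((1-β)/β) ≤ lmin ^ ((1-β)/β) :=
      Real.rpow_le_rpow_of_nonpos hlmin hxl
        (div_nonpos_of_nonpos_of_nonneg (by linarith) hβ0.le)
    have h3 : lmin ^ ((1-β)/β) = lmin ^ ((1:ℝ)/β) / lmin := by
      rw [show (1-β)/β = 1/β - 1 by field_simp, Real.rpow_sub hlmin, Real.rpow_one]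
    have h4 : δ * x ^ ((1-β)/β) ≤ δ * (lmin ^ ((1:ℝ)/β) / lmin) := by
      rw [← h3]; exact mul_le_mul_of_nonneg_left h2 hδ0
    rw [hg]
    simp only
    rw [e1, e2, ha]
    have h5 : lmin ^ ((1:ℝ)/β) * (1 - δ/lmin) =
        lmin ^ ((1:ℝ)/β) - δ * (lmin ^ ((1:ℝ)/β) / lmin) := by
      field_simp
    linarith
  have hterm2_psd : (hσH.cfc g).PosSemidef := myCfc_psd hσH g hgpos
  have hkey : S * ρ * S - (a : ℂ) • 1 =
      S * ((ρ - σ) + (δ:ℂ) • 1) * S + (S * σ * S - (δ:ℂ) • (S * S) - (a:ℂ) • 1) := by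
    have hδ1 : S * ((δ:ℂ) • 1) * S = (δ:ℂ) • (S * S) := by
      rw [Matrix.mul_smul, Matrix.smul_mul, mul_one]
    rw [mul_add, add_mul, mul_sub, sub_mul, hδ1]
    abel
  have hpart1 : (S * ((ρ - σ) + (δ:ℂ) • 1) * S).PosSemidef := by
    have h := hlo.mul_mul_conjTranspose_same S
    rwa [hS_herm.eq] at h
  have goal1 : (S * ρ * S - (a : ℂ) • 1).PosSemidef := by
    rw [hkey, hterm2]
    exact hpart1.add hterm2_psd
  have hAH : (S * ρ * S).IsHermitian := by
    have h := isHermitian_mul_mul_conjTranspose S hρ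
    rwa [hS_herm.eq] at h
  have goal2 : (S * ρ * S).PosDef := by
    refine Matrix.PosDef.of_dotProduct_mulVec_pos hAH fun x hx => ?_
    have h2 := goal1.dotProduct_mulVec_nonneg x
    have e : star x ⬝ᵥ ((S * ρ * S) *ᵥ x) =
        star x ⬝ᵥ ((S * ρ * S - (a:ℂ) • 1) *ᵥ x) + (a:ℂ) * (star x ⬝ᵥ x) := by
      rw [sub_mulVec, smul_mulVec, one_mulVec, dotProduct_sub,
        dotProduct_smul, smul_eq_mul]
      ring
    rw [e]
    exact add_pos_of_nonneg_of_pos h2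
      (mul_pos (Complex.zero_lt_real.mpr ha_pos)
        (Matrix.dotProduct_star_self_pos_iff.mpr hx))
  have heig := myEig_lower hAH a goal1
  have goal3 : (mpow (S * ρ * S) β - ((lmin * (1 - δ/lmin) ^ β : ℝ) : ℂ) • 1).PosSemidef := by
    have hmp : mpow (S * ρ * S) β = hAH.cfc (fun x => x ^ β) :=
      Matrix.IsHermitian.cfc_eq hAH _
    have e : mpow (S * ρ * S) β - ((lmin * (1 - δ/lmin) ^ β : ℝ) : ℂ) • 1 =
        hAH.cfc (fun x => x ^ β - lmin * (1 - δ/lmin) ^ β) := by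
      rw [hmp, ← myCfc_const hAH (lmin * (1 - δ/lmin) ^ β), myCfc_sub]
    rw [e]
    apply myCfc_psd
    intro i
    have hxa : a ≤ hAH.eigenvalues i := heig i
    have hpow : a ^ β ≤ (hAH.eigenvalues i) ^ β :=
      Real.rpow_le_rpow ha_pos.le hxa hβ0.le
    have hab : a ^ β = lmin * (1 - δ/lmin) ^ β := by
      have hu : (0:ℝ) ≤ 1 - δ/lmin := by
        have : δ / lmin < 1 := (div_lt_one hlmin).mpr hδ
        linarith
      rw [ha, Real.mul_rpow (Real.rpow_nonneg hlmin.le _) hu,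
        ← Real.rpow_mul hlmin.le, one_div, inv_mul_cancel₀ hβne, Real.rpow_one]
    linarith
  rw [show mpow σ c = S from hSdef]
  exact ⟨goal1, goal2, goal3⟩
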